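/- Let μ : [0,∞) → (0,∞) be non-increasing with μ ∉ L¹, and S(x) = ∫₀ˣ μ. Suppose there exists λ > 1 with λ · liminf_{t→∞} μ(λt)/μ(t) > 1. Then liminf_{x→∞} S(λx)/S(x) ≥ λ · liminf_{x→∞} μ(λx)/μ(x) > 1. -/

import Mathlib

open MeasureTheory Filter

theorem stmt_9 (μ : ℝ → ℝ) (hpos : ∀ x ≥ 0, 0 < μ x)
    (hmono : AntitoneOn μ (Set.Ici 0))
    (hrc : ∀ x ≥ (0:ℝ), ContinuousWithinAt μ (Set.Ici x) x)
    (hnotint : ¬ IntegrableOn μ (Set.Ici 0))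
    (S : ℝ → ℝ) (hS : ∀ x, S x = ∫ y in (0:ℝ)..x, μ y)
    (l : ℝ) (hl : 1 < l)
    (hlim : 1 < l * Filter.liminf (fun t => μ (l * t) / μ t) Filter.atTop) :
    l * Filter.liminf (fun x => μ (l * x) / μ x) Filter.atTop ≤
      Filter.liminf (fun x => S (l * x) / S x) Filter.atTop ∧
    1 < l * Filter.liminf (fun x => μ (l * x) / μ x) Filter.atTop := by
  have hl0 : (0:ℝ) < l := by linarith
  set L := Filter.liminf (fun t => μ (l * t) / μ t) Filter.atTop with hLdef
  -- interval integrability of μ on nonneg intervals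
  have hint : ∀ a b : ℝ, 0 ≤ a → 0 ≤ b → IntervalIntegrable μ volume a b := by
    intro a b ha hb
    apply AntitoneOn.intervalIntegrable
    apply hmono.mono
    intro x hx
    rw [Set.uIcc_eq_union] at hx
    rcases hx with h | h
    · exact le_trans ha h.1
    · exact le_trans hb h.1
  have hint2 : ∀ a b : ℝ, 0 ≤ a → 0 ≤ b →
      IntervalIntegrable (fun t => μ (l * t)) volume a b := by
    intro a b ha hb
    apply AntitoneOn.intervalIntegrable
    intro x hx y hy hxy
    have hx0 : 0 ≤ x := by
      rw [Set.uIcc_eq_union] at hx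
      rcases hx with h | h
      · exact le_trans ha h.1
      · exact le_trans hb h.1
    have hy0 : 0 ≤ y := le_trans hx0 hxy
    exact hmono (Set.mem_Ici.mpr (mul_nonneg hl0.le hx0))
      (Set.mem_Ici.mpr (mul_nonneg hl0.le hy0))
      (mul_le_mul_of_nonneg_left hxy hl0.le)
  -- S is nondecreasing on [0, ∞), and the additivity formula
  have hSadd : ∀ a b : ℝ, 0 ≤ a → 0 ≤ b → S b = S a + ∫ y in a..b, μ y := by
    intro a b ha hb
    rw [hS, hS]
    rw [intervalIntegral.integral_add_adjacent_intervals (hint 0 a le_rfl ha)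
      (hint a b ha hb)]
  have hSmono : ∀ a b : ℝ, 0 ≤ a → a ≤ b → S a ≤ S b := by
    intro a b ha hab
    have hb : 0 ≤ b := le_trans ha hab
    rw [hSadd a b ha hb]
    have : 0 ≤ ∫ y in a..b, μ y :=
      intervalIntegral.integral_nonneg hab (fun u hu => (hpos u (le_trans ha hu.1)).le)
    linarith
  have hS00 : S 0 = 0 := by rw [hS]; simp
  have hSnonneg : ∀ a : ℝ, 0 ≤ a → 0 ≤ S a := by
    intro a ha
    have := hSmono 0 a le_rfl ha
    linarith [hS00 ▸ this]
  have hS1 : 0 < S 1 := by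
    rw [hS]
    exact intervalIntegral.intervalIntegral_pos_of_pos_on (hint 0 1 le_rfl zero_le_one)
      (fun x hx => hpos x hx.1.le) one_pos
  have hSpos : ∀ x : ℝ, 1 ≤ x → 0 < S x :=
    fun x hx => lt_of_lt_of_le hS1 (hSmono 1 x zero_le_one hx)
  -- S tends to infinity
  have hStop : Filter.Tendsto S Filter.atTop Filter.atTop := by
    by_contra hcon
    rw [tendsto_atTop] at hcon
    push_neg at hcon
    obtain ⟨M, hM⟩ := hcon
    have hbd : ∀ y : ℝ, 0 ≤ y → S y < M := by
      intro y hy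
      obtain ⟨x, hxM, hxy⟩ := (hM.and_eventually (eventually_ge_atTop y)).exists
      exact lt_of_le_of_lt (hSmono y x hy hxy) hxM
    apply hnotint
    rw [integrableOn_Ici_iff_integrableOn_Ioi]
    apply MeasureTheory.integrableOn_Ioi_of_intervalIntegral_norm_bounded
      (l := Filter.atTop) (b := fun n : ℕ => (n : ℝ)) M 0
    · intro n
      exact ((intervalIntegrable_iff_integrableOn_Ioc_of_le
        (Nat.cast_nonneg n)).mp (hint 0 n le_rfl (Nat.cast_nonneg n)))
    · exact tendsto_natCast_atTop_atTop
    · filter_upwards with n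
      have heq : (∫ x in (0:ℝ)..(n:ℝ), ‖μ x‖) = ∫ x in (0:ℝ)..(n:ℝ), μ x := by
        apply intervalIntegral.integral_congr
        intro x hx
        rw [Set.uIcc_of_le (Nat.cast_nonneg n)] at hx
        exact Real.norm_of_nonneg (hpos x hx.1).le
      rw [heq, ← hS]
      exact (hbd n (Nat.cast_nonneg n)).le
  -- basic bounds on the ratio μ(l t)/μ t
  have hratio : ∀ᶠ t in Filter.atTop, 0 ≤ μ (l * t) / μ t ∧ μ (l * t) / μ t ≤ 1 := by
    filter_upwards [eventually_ge_atTop (0:ℝ)] with t ht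
    have hlt0 : 0 ≤ l * t := mul_nonneg hl0.le ht
    constructor
    · exact div_nonneg (hpos _ hlt0).le (hpos t ht).le
    · rw [div_le_one (hpos t ht)]
      exact hmono (Set.mem_Ici.mpr ht) (Set.mem_Ici.mpr hlt0)
        (le_mul_of_one_le_left ht hl.le)
  have hbb : Filter.IsBoundedUnder (· ≥ ·) Filter.atTop (fun t => μ (l * t) / μ t) :=
    ⟨0, by rw [Filter.eventually_map]; filter_upwards [hratio] with t ht using ht.1⟩
  have hL0 : 0 < L := by nlinarith [hlim]
  -- the S-ratio is eventually at most l (for coboundedness)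
  have hub : ∀ᶠ x in Filter.atTop, S (l * x) / S x ≤ l := by
    filter_upwards [eventually_ge_atTop (1:ℝ)] with x hx1
    have hx0 : (0:ℝ) ≤ x := le_trans zero_le_one hx1
    have hlx : x ≤ l * x := le_mul_of_one_le_left hx0 hl.le
    have hSx : 0 < S x := hSpos x hx1
    rw [div_le_iff₀ hSx]
    have h1 : S (l * x) = S x + ∫ y in x..(l * x), μ y :=
      hSadd x (l * x) hx0 (le_trans hx0 hlx)
    have h2 : (∫ y in x..(l * x), μ y) ≤ ∫ _ in x..(l * x), μ x := by
      apply intervalIntegral.integral_mono_on hlx (hint x (l*x) hx0 (le_trans hx0 hlx))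
        intervalIntegrable_const
      intro t ht
      exact hmono (Set.mem_Ici.mpr hx0) (Set.mem_Ici.mpr (le_trans hx0 ht.1)) ht.1
    have h3 : (∫ _ in x..(l * x), μ x) = (l * x - x) * μ x := by
      rw [intervalIntegral.integral_const]; simp [smul_eq_mul]
    have h4 : (∫ _ in (0:ℝ)..x, μ x) ≤ ∫ y in (0:ℝ)..x, μ y := by
      apply intervalIntegral.integral_mono_on hx0 intervalIntegrable_const
        (hint 0 x le_rfl hx0)
      intro t ht
      exact hmono (Set.mem_Ici.mpr ht.1) (Set.mem_Ici.mpr hx0) ht.2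
    have h5 : x * μ x ≤ S x := by
      rw [hS]
      have : (∫ _ in (0:ℝ)..x, μ x) = x * μ x := by
        rw [intervalIntegral.integral_const]; simp [smul_eq_mul]
      linarith [this ▸ h4]
    nlinarith [hpos x hx0]
  have hcob : Filter.IsCoboundedUnder (· ≥ ·) Filter.atTop (fun x => S (l * x) / S x) :=
    Filter.isCoboundedUnder_ge_of_eventually_le _ hub
  -- main estimate
  have key : ∀ ε : ℝ, 0 < ε →
      l * L - ε ≤ Filter.liminf (fun x => S (l * x) / S x) Filter.atTop := by
    intro ε hε
    set c := max 0 (L - ε / (2 * l)) with hcdef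
    have hc0 : 0 ≤ c := le_max_left _ _
    have hcL : c < L := by
      apply max_lt hL0
      have : 0 < ε / (2 * l) := by positivity
      linarith
    have hcl : l * L - ε / 2 ≤ l * c := by
      have h := mul_le_mul_of_nonneg_left (le_max_right 0 (L - ε / (2 * l))) hl0.le
      rw [mul_sub] at h
      rw [mul_div_assoc'] at h
      have : l * ε / (2 * l) = ε / 2 := by field_simp
      linarith [this ▸ h]
    have hev : ∀ᶠ t in Filter.atTop, c < μ (l * t) / μ t :=
      Filter.eventually_lt_of_lt_liminf hcL hbb
    obtain ⟨T₀, hT₀⟩ := (hev.and (eventually_ge_atTop (1:ℝ))).exists_forall_of_atTop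
    set T := max T₀ 1 with hTdef
    have hT1 : 1 ≤ T := le_max_right _ _
    have hT0 : 0 ≤ T := le_trans zero_le_one hT1
    have hmul : ∀ t, T ≤ t → c * μ t ≤ μ (l * t) := by
      intro t ht
      have h := (hT₀ t (le_trans (le_max_left _ _) ht)).1
      have ht0 : 0 ≤ t := le_trans hT0 ht
      exact ((lt_div_iff₀ (hpos t ht0)).mp h).le
    set K := l * c * S T with hKdef
    have hK0 : 0 ≤ K := mul_nonneg (mul_nonneg hl0.le hc0) (hSnonneg T hT0)
    have hkey : ∀ x : ℝ, T ≤ x → l * c * S x - K ≤ S (l * x) := by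
      intro x hx
      have hx0 : 0 ≤ x := le_trans hT0 hx
      have hlT0 : 0 ≤ l * T := mul_nonneg hl0.le hT0
      have hlx0 : 0 ≤ l * x := mul_nonneg hl0.le hx0
      have e1 : S (l * x) = S (l * T) + ∫ y in (l*T)..(l*x), μ y :=
        hSadd (l*T) (l*x) hlT0 hlx0
      have e2 : (∫ t in T..x, μ (l * t)) = l⁻¹ * ∫ y in (l*T)..(l*x), μ y := by
        rw [intervalIntegral.integral_comp_mul_left (f := μ) (ne_of_gt hl0)]
        simp [smul_eq_mul]
      have e3 : c * (S x - S T) ≤ ∫ t in T..x, μ (l * t) := by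
        have hST : S x = S T + ∫ y in T..x, μ y := hSadd T x hT0 hx0
        have hmle : (∫ t in T..x, c * μ t) ≤ ∫ t in T..x, μ (l * t) := by
          apply intervalIntegral.integral_mono_on hx
            ((hint T x hT0 hx0).const_mul c) (hint2 T x hT0 hx0)
          intro t ht
          exact hmul t ht.1
        rw [intervalIntegral.integral_const_mul] at hmle
        have : (∫ y in T..x, μ y) = S x - S T := by linarith [hST]
        linarith [this ▸ hmle]
      have e4 : 0 ≤ S (l * T) := hSnonneg _ hlT0
      have e5 : l * (c * (S x - S T)) ≤ l * ∫ t in T..x, μ (l * t) :=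
        mul_le_mul_of_nonneg_left e3 hl0.le
      have e6 : (l : ℝ) * ∫ t in T..x, μ (l * t) = ∫ y in (l*T)..(l*x), μ y := by
        rw [e2]; field_simp
      nlinarith [e6 ▸ e5]
    -- eventual lower bound for the S-ratio
    have hev2 : ∀ᶠ x in Filter.atTop, l * L - ε ≤ S (l * x) / S x := by
      filter_upwards [eventually_ge_atTop T,
        hStop.eventually_ge_atTop (2 * K / ε + 1)] with x hxT hxM
      have hx1 : 1 ≤ x := le_trans hT1 hxT
      have hSx : 0 < S x := hSpos x hx1
      rw [le_div_iff₀ hSx]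
      have h1 : l * c * S x - K ≤ S (l * x) := hkey x hxT
      have h2 : K ≤ ε / 2 * S x := by
        have hcomp : ε / 2 * (2 * K / ε + 1) = K + ε / 2 := by
          field_simp
        nlinarith [mul_le_mul_of_nonneg_left hxM (by positivity : (0:ℝ) ≤ ε / 2)]
      nlinarith [mul_le_mul_of_nonneg_right hcl hSx.le]
    exact Filter.le_liminf_of_le hcob hev2
  constructor
  · by_contra hcon
    push_neg at hcon
    set A := Filter.liminf (fun x => S (l * x) / S x) Filter.atTop
    have := key ((l * L - A) / 2) (by linarith)
    linarith
  · exact hlim
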